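/- Every ultrafilter U on ω, viewed as a subspace of 2^ω, is a Baire space. -/

import Mathlib

open Set Topology TopologicalSpace Filter

def toCantorSet (U : Ultrafilter ℕ) : Set (ℕ → Bool) :=
  {x | {n | x n = true} ∈ U}

section Aux

variable {X Y : Type*} [TopologicalSpace X] [TopologicalSpace Y]

/-- A set nowhere dense in a subspace is nowhere dense in the ambient space. -/
lemma aux_nwd_image_val {S : Set X} {A : Set ↥S} (hA : IsNowhereDense A) :
    IsNowhereDense (Subtype.val '' A : Set X) := by
  rw [IsNowhereDense, eq_empty_iff_forall_notMem]
  intro x hx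
  obtain ⟨V, hVsub, hVo, hxV⟩ := mem_interior.mp hx
  have hxS : x ∈ closure S := by
    refine closure_mono ?_ (hVsub hxV)
    exact fun y ⟨a, _, hy⟩ => hy ▸ a.2
  obtain ⟨y, hyV, hyS⟩ := mem_closure_iff.mp hxS V hVo hxV
  have hsub : (Subtype.val ⁻¹' V : Set ↥S) ⊆ closure A := by
    rw [IsInducing.subtypeVal.closure_eq_preimage_closure_image A]
    exact fun z hz => hVsub hz
  have : (⟨y, hyS⟩ : ↥S) ∈ interior (closure A) :=
    mem_interior.mpr ⟨Subtype.val ⁻¹' V, hsub, hVo.preimage continuous_subtype_val, hyV⟩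
  rw [hA] at this
  exact this

/-- A set meagre in itself is meagre in the ambient space. -/
lemma aux_meagre_val {S : Set X} (h : IsMeagre (univ : Set ↥S)) : IsMeagre S := by
  rw [isMeagre_iff_countable_union_isNowhereDense] at h ⊢
  obtain ⟨T, hT, hTc, hcover⟩ := h
  refine ⟨(Set.image Subtype.val) '' T, ?_, hTc.image _, ?_⟩
  · rintro t ⟨a, ha, rfl⟩
    exact aux_nwd_image_val (hT a ha)
  · intro x hxS
    obtain ⟨t, ht, hxt⟩ := hcover (mem_univ (⟨x, hxS⟩ : ↥S))
    exact ⟨Subtype.val '' t, ⟨t, ht, rfl⟩, ⟨⟨x, hxS⟩, hxt, rfl⟩⟩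

lemma aux_homeo_nwd (e : X ≃ₜ Y) {s : Set X} (hs : IsNowhereDense s) :
    IsNowhereDense (e '' s) := by
  rw [IsNowhereDense, ← e.image_closure, ← e.image_interior, hs, image_empty]

lemma aux_homeo_meagre (e : X ≃ₜ Y) {s : Set X} (hs : IsMeagre s) : IsMeagre (e '' s) := by
  rw [isMeagre_iff_countable_union_isNowhereDense] at hs ⊢
  obtain ⟨T, hT, hTc, hcover⟩ := hs
  refine ⟨(Set.image e) '' T, ?_, hTc.image _, ?_⟩
  · rintro t ⟨a, ha, rfl⟩
    exact aux_homeo_nwd e (hT a ha)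
  · rintro y ⟨x, hx, rfl⟩
    obtain ⟨t, ht, hxt⟩ := hcover hx
    exact ⟨e '' t, ⟨t, ht, rfl⟩, ⟨x, hxt, rfl⟩⟩

lemma aux_meagre_sUnion {T : Set (Set X)} (hc : T.Countable)
    (h : ∀ t ∈ T, IsMeagre t) : IsMeagre (⋃₀ T) := by
  rw [IsMeagre, compl_sUnion]
  refine (countable_sInter_mem (hc.image _)).mpr ?_
  rintro s ⟨t, ht, rfl⟩
  exact h t ht

lemma aux_meagre_union {s t : Set X} (hs : IsMeagre s) (ht : IsMeagre t) :
    IsMeagre (s ∪ t) := by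
  rw [IsMeagre, compl_union]
  exact inter_mem hs ht

end Aux

section Ultra

variable (U : Ultrafilter ℕ)

lemma xor3_mem {x y z : ℕ → Bool} (hx : x ∈ toCantorSet U)
    (hy : y ∈ toCantorSet U) (hz : z ∈ toCantorSet U) :
    (fun n => xor (xor (x n) (y n)) (z n)) ∈ toCantorSet U := by
  have h : {n | x n = true} ∩ {n | y n = true} ∩ {n | z n = true} ∈ (U : Filter ℕ) :=
    inter_mem (inter_mem hx hy) hz
  refine mem_of_superset h ?_
  rintro n ⟨⟨h1, h2⟩, h3⟩
  simp only [mem_setOf_eq] at h1 h2 h3 ⊢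
  simp [h1, h2, h3]

/-- Translation homeomorphism of the ultrafilter sending `a` to `b`. -/
def transHomeo (a b : ↥(toCantorSet U)) : ↥(toCantorSet U) ≃ₜ ↥(toCantorSet U) where
  toFun z := ⟨fun n => xor (xor (a.1 n) (b.1 n)) (z.1 n), xor3_mem U a.2 b.2 z.2⟩
  invFun z := ⟨fun n => xor (xor (a.1 n) (b.1 n)) (z.1 n), xor3_mem U a.2 b.2 z.2⟩
  left_inv z := by
    apply Subtype.ext; funext n
    show xor (xor (a.1 n) (b.1 n)) (xor (xor (a.1 n) (b.1 n)) (z.1 n)) = z.1 n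
    generalize a.1 n = p; generalize b.1 n = q; generalize z.1 n = r
    cases p <;> cases q <;> cases r <;> rfl
  right_inv z := by
    apply Subtype.ext; funext n
    show xor (xor (a.1 n) (b.1 n)) (xor (xor (a.1 n) (b.1 n)) (z.1 n)) = z.1 n
    generalize a.1 n = p; generalize b.1 n = q; generalize z.1 n = r
    cases p <;> cases q <;> cases r <;> rfl
  continuous_toFun := by
    refine Continuous.subtype_mk (continuous_pi fun n => ?_) _
    have hcoord : Continuous (fun z : ↥(toCantorSet U) => z.1 n) :=
      (continuous_apply n).comp continuous_subtype_val
    exact (continuous_of_discreteTopology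
      (f := fun v : Bool => xor (xor (a.1 n) (b.1 n)) v)).comp hcoord
  continuous_invFun := by
    refine Continuous.subtype_mk (continuous_pi fun n => ?_) _
    have hcoord : Continuous (fun z : ↥(toCantorSet U) => z.1 n) :=
      (continuous_apply n).comp continuous_subtype_val
    exact (continuous_of_discreteTopology
      (f := fun v : Bool => xor (xor (a.1 n) (b.1 n)) v)).comp hcoord

lemma transHomeo_apply (a b : ↥(toCantorSet U)) : transHomeo U a b a = b := by
  apply Subtype.ext; funext n
  show xor (xor (a.1 n) (b.1 n)) (a.1 n) = b.1 n
  cases h1 : a.1 n <;> cases h2 : b.1 n <;> simp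

/-- The complement homeomorphism. -/
def negHomeo : (ℕ → Bool) ≃ₜ (ℕ → Bool) where
  toFun x n := !(x n)
  invFun x n := !(x n)
  left_inv x := funext fun n => Bool.not_not _
  right_inv x := funext fun n => Bool.not_not _
  continuous_toFun := continuous_pi fun n =>
    (continuous_of_discreteTopology (f := fun v : Bool => !v)).comp (continuous_apply n)
  continuous_invFun := continuous_pi fun n =>
    (continuous_of_discreteTopology (f := fun v : Bool => !v)).comp (continuous_apply n)

lemma negHomeo_image : negHomeo '' toCantorSet U = (toCantorSet U)ᶜ := by
  ext x
  constructor
  · rintro ⟨y, hy, rfl⟩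
    simp only [mem_compl_iff, toCantorSet, mem_setOf_eq] at hy ⊢
    have : {n | negHomeo y n = true} = {n | y n = true}ᶜ := by
      ext n; simp [negHomeo]
    rw [this]
    rw [Ultrafilter.compl_mem_iff_notMem]
    simpa using hy
  · intro hx
    refine ⟨negHomeo x, ?_, funext fun n => Bool.not_not _⟩
    simp only [mem_compl_iff, toCantorSet, mem_setOf_eq] at hx ⊢
    have : {n | negHomeo x n = true} = {n | x n = true}ᶜ := by
      ext n; simp [negHomeo]
    rw [this, Ultrafilter.compl_mem_iff_notMem]
    exact hx

end Ultra

theorem ultrafilter_is_baire_space (U : Ultrafilter ℕ) :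
    BaireSpace ↥(toCantorSet U) := by
  constructor
  intro f ho hd
  by_contra hdense
  rw [dense_iff_inter_open] at hdense
  push_neg at hdense
  obtain ⟨W, hWo, hWne, hWint⟩ := hdense
  -- W is meagre in the subspace
  have hWmeagre : IsMeagre W := by
    have hsub : W ⊆ ⋃ n, (f n)ᶜ := by
      intro x hx
      by_contra h
      simp only [mem_iUnion, mem_compl_iff, not_exists, not_not] at h
      exact (eq_empty_iff_forall_notMem.mp hWint) x ⟨hx, mem_iInter.mpr h⟩
    refine IsMeagre.mono hsub (isMeagre_iUnion fun n => ?_)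
    rw [isMeagre_iff_countable_union_isNowhereDense]
    refine ⟨{(f n)ᶜ}, ?_, countable_singleton _, by simp⟩
    rintro t ht
    rw [mem_singleton_iff] at ht
    subst ht
    rw [(ho n).isClosed_compl.isNowhereDense_iff, interior_compl, (hd n).closure_eq,
      compl_univ]
  obtain ⟨w, hw⟩ := hWne
  -- the whole subspace is meagre in itself
  have huniv : IsMeagre (univ : Set ↥(toCantorSet U)) := by
    set M := {b ∈ countableBasis ↥(toCantorSet U) | IsMeagre b} with hM
    have hcover : (univ : Set ↥(toCantorSet U)) ⊆ ⋃₀ M := by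
      intro z _
      set e := transHomeo U w z with he
      have hmeagre : IsMeagre (e '' W) := aux_homeo_meagre e hWmeagre
      have hopen : IsOpen (e '' W) := e.isOpen_image.mpr hWo
      have hz : z ∈ e '' W := ⟨w, hw, transHomeo_apply U w z⟩
      obtain ⟨b, hbB, hzb, hbsub⟩ :=
        (isBasis_countableBasis ↥(toCantorSet U)).exists_subset_of_mem_open hz hopen
      exact ⟨b, ⟨hbB, hmeagre.mono hbsub⟩, hzb⟩
    refine IsMeagre.mono hcover (aux_meagre_sUnion ?_ ?_)
    · exact (countable_countableBasis _).mono fun b hb => hb.1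
    · exact fun t ht => ht.2
  -- transfer to the ambient Cantor space
  have hS : IsMeagre (toCantorSet U) := aux_meagre_val huniv
  have hSc : IsMeagre (toCantorSet U)ᶜ := by
    rw [← negHomeo_image U]
    exact aux_homeo_meagre negHomeo hS
  have hall : IsMeagre (univ : Set (ℕ → Bool)) :=
    (aux_meagre_union hS hSc).mono (by simp)
  have hdense : Dense (∅ : Set (ℕ → Bool)) := by
    apply dense_of_mem_residual
    rw [← compl_univ]
    exact hall
  simpa using hdense.nonempty
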